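/- Let R be a domain, B = R[x^{±1}] the Laurent polynomial ring in one variable over R, and A an R-subalgebra of B generated as an R-algebra by monic monomials x^a (a ∈ ℤ), with A strictly larger than the image of R. Let S = A ∩ B^× and S⁻¹A = {b ∈ B : s·b ∈ A for some s ∈ S}. Then the following are equivalent: (1) A is quasi-factorially closed in B; (2) the subgroup of ℤ generated by M(A) = {a ∈ ℤ : x^a ∈ A} is all of ℤ (i.e., gcd of the elements of M(A) is 1); (3) S⁻¹A = B; (4) the gap set Gap(A) is finite. -/

import Mathlib

/-- An `R`-subalgebra `A` of `B` is quasi-factorially closed (qfc) in `B`. -/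
def IsQfc {R B : Type*} [CommSemiring R] [CommRing B] [Algebra R B] (A : Subalgebra R B) : Prop :=
  ∀ a b : B, a ≠ 0 → b ≠ 0 → a * b ∈ A →
    ∃ u v : Bˣ, (u : B) * a ∈ A ∧ (v : B) * b ∈ A

/-- The cone of a subset `D ⊆ ℤ` in `ℝ`: all finite nonnegative real combinations. -/
def coneOfZ (D : Set ℤ) : Set ℝ :=
  {x | ∃ c : ℤ →₀ ℝ, (↑c.support : Set ℤ) ⊆ D ∧ (∀ a, 0 ≤ c a) ∧
      x = c.sum fun a t => t * (a : ℝ)}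

/-- `M(A)`: the set of `a ∈ ℤ` with `x^a ∈ A`. -/
def monSet {R : Type*} [CommRing R] (A : Set (LaurentPolynomial R)) : Set ℤ :=
  {a | (LaurentPolynomial.T a : LaurentPolynomial R) ∈ A}

/-- `S(A)`: the union of the supports of the elements of `A`. -/
def suppSet {R : Type*} [CommRing R] (A : Set (LaurentPolynomial R)) : Set ℤ :=
  {a | ∃ f ∈ A, a ∈ f.coeff.support}

/-- `C(A)`: integers lying in the cone generated by `S(A)`. -/
def latticeCone {R : Type*} [CommRing R] (A : Set (LaurentPolynomial R)) : Set ℤ :=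
  {a | (a : ℝ) ∈ coneOfZ (suppSet A)}

/-- The gap set `Gap(A) = C(A) \ M(A)`. -/
def gapSet {R : Type*} [CommRing R] (A : Set (LaurentPolynomial R)) : Set ℤ :=
  latticeCone A \ monSet A

/-- The localization `S⁻¹A` of `A` at `S = A ∩ B^×`, identified with an `R`-subalgebra of `B`. -/
def locSet {B : Type*} [CommRing B] (A : Set B) : Set B :=
  {b | ∃ s ∈ A, IsUnit s ∧ s * b ∈ A}


open LaurentPolynomial Finsupp

namespace QfcAux

set_option linter.unusedSectionVars false


variable {R : Type*} [CommRing R] [IsDomain R]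

lemma support_T (n : ℤ) : (T n : R[T;T⁻¹]).coeff.support = {n} :=
  Finsupp.support_single_ne_zero n one_ne_zero

/-- The subalgebra of Laurent polynomials with support in an additive submonoid. -/
def shadow (M : AddSubmonoid ℤ) : Subalgebra R (LaurentPolynomial R) where
  carrier := {f | ∀ n ∈ f.coeff.support, n ∈ M}
  mul_mem' := by
    classical
    intro f g hf hg n hn
    obtain ⟨a, ha, b, hb, rfl⟩ := Finset.mem_add.mp (AddMonoidAlgebra.support_coeff_mul_subset f g hn)
    exact add_mem (hf a ha) (hg b hb)
  add_mem' := by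
    intro f g hf hg n hn
    rcases Finset.mem_union.mp (Finsupp.support_add (g₁ := f.coeff) (g₂ := g.coeff) hn) with h | h
    exacts [hf n h, hg n h]
  one_mem' := by
    intro n hn
    have := Finsupp.support_single_subset (a := (0:ℤ)) (b := (1:R)) hn
    simp only [Finset.mem_singleton] at this
    subst this; exact zero_mem M
  zero_mem' := by
    intro n hn
    simp at hn
  algebraMap_mem' := by
    intro r n hn
    have : (algebraMap R (LaurentPolynomial R) r).coeff = Finsupp.single 0 r := rfl
    rw [this] at hn
    have := Finsupp.support_single_subset hn
    simp only [Finset.mem_singleton] at this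
    subst this; exact zero_mem M

lemma mem_shadow_iff {M : AddSubmonoid ℤ} {f : LaurentPolynomial R} :
    f ∈ shadow M ↔ ∀ n ∈ f.coeff.support, n ∈ M := Iff.rfl

lemma T_mem_shadow {M : AddSubmonoid ℤ} {n : ℤ} :
    (T n : R[T;T⁻¹]) ∈ shadow M ↔ n ∈ M := by
  rw [mem_shadow_iff]
  simp [support_T]

lemma T_mem_adjoin {D : Set ℤ} {n : ℤ} (hn : n ∈ AddSubmonoid.closure D) :
    (T n : R[T;T⁻¹]) ∈ Algebra.adjoin R ((fun a => (T a : LaurentPolynomial R)) '' D) := by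
  induction hn using AddSubmonoid.closure_induction with
  | mem a ha => exact Algebra.subset_adjoin ⟨a, ha, rfl⟩
  | zero => rw [T_zero]; exact Subalgebra.one_mem _
  | add a b _ _ ha hb => rw [T_add]; exact Subalgebra.mul_mem _ ha hb

lemma adjoin_eq_shadow (D : Set ℤ) :
    Algebra.adjoin R ((fun a => (T a : LaurentPolynomial R)) '' D)
      = shadow (AddSubmonoid.closure D) := by
  apply le_antisymm
  · rw [Algebra.adjoin_le_iff]
    rintro - ⟨a, ha, rfl⟩
    exact T_mem_shadow.mpr (AddSubmonoid.subset_closure ha)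
  · intro f hf
    have hf' : f = ∑ n ∈ f.coeff.support, AddMonoidAlgebra.single n (f.coeff n) := by
      conv_lhs => rw [← AddMonoidAlgebra.sum_coeff_single f]
      rfl
    rw [hf']
    refine Subalgebra.sum_mem _ fun n hn => ?_
    rw [single_eq_C_mul_T]
    refine Subalgebra.mul_mem _ ?_ ?_
    · rw [C_eq_algebraMap]; exact Subalgebra.algebraMap_mem _ _
    · exact T_mem_adjoin (hf n hn)



variable {R : Type*} [CommRing R] [IsDomain R]

lemma cne {f : LaurentPolynomial R} (hf : f ≠ 0) : f.coeff ≠ 0 :=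
  AddMonoidAlgebra.coeff_eq_zero.not.mpr hf

lemma max_add_mem_support {f g : LaurentPolynomial R} (hf : f ≠ 0) (hg : g ≠ 0) :
    f.coeff.support.max' (Finsupp.support_nonempty_iff.mpr (cne hf))
      + g.coeff.support.max' (Finsupp.support_nonempty_iff.mpr (cne hg)) ∈ (f * g).coeff.support := by
  set a0 := f.coeff.support.max' (Finsupp.support_nonempty_iff.mpr (cne hf)) with ha0
  set b0 := g.coeff.support.max' (Finsupp.support_nonempty_iff.mpr (cne hg)) with hb0
  have hu : UniqueAdd f.coeff.support g.coeff.support a0 b0 := by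
    intro a b ha hb hab
    have h1 := Finset.le_max' _ a ha
    have h2 := Finset.le_max' _ b hb
    constructor <;> omega
  rw [Finsupp.mem_support_iff, AddMonoidAlgebra.coeff_mul_add_of_uniqueAdd hu]
  exact mul_ne_zero (Finsupp.mem_support_iff.mp (f.coeff.support.max'_mem _))
    (Finsupp.mem_support_iff.mp (g.coeff.support.max'_mem _))

lemma min_add_mem_support {f g : LaurentPolynomial R} (hf : f ≠ 0) (hg : g ≠ 0) :
    f.coeff.support.min' (Finsupp.support_nonempty_iff.mpr (cne hf))
      + g.coeff.support.min' (Finsupp.support_nonempty_iff.mpr (cne hg)) ∈ (f * g).coeff.support := by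
  set a0 := f.coeff.support.min' (Finsupp.support_nonempty_iff.mpr (cne hf)) with ha0
  set b0 := g.coeff.support.min' (Finsupp.support_nonempty_iff.mpr (cne hg)) with hb0
  have hu : UniqueAdd f.coeff.support g.coeff.support a0 b0 := by
    intro a b ha hb hab
    have h1 := Finset.min'_le _ a ha
    have h2 := Finset.min'_le _ b hb
    constructor <;> omega
  rw [Finsupp.mem_support_iff, AddMonoidAlgebra.coeff_mul_add_of_uniqueAdd hu]
  exact mul_ne_zero (Finsupp.mem_support_iff.mp (f.coeff.support.min'_mem _))
    (Finsupp.mem_support_iff.mp (g.coeff.support.min'_mem _))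

/-- Units of the Laurent polynomial ring over a domain are monomials. -/
lemma isUnit_single {f : LaurentPolynomial R} (h : IsUnit f) :
    ∃ (n : ℤ) (r : R), r ≠ 0 ∧ f = AddMonoidAlgebra.single n r := by
  obtain ⟨u, rfl⟩ := h
  obtain ⟨g, hg⟩ : ∃ g, (u : LaurentPolynomial R) * g = 1 := ⟨u.inv, u.val_inv⟩
  set f := (u : LaurentPolynomial R)
  have hf : f ≠ 0 := u.ne_zero
  have hgne : g ≠ 0 := by
    rintro rfl; rw [mul_zero] at hg; exact one_ne_zero hg.symm
  have hsupp1 : (f * g).coeff.support = {0} := by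
    rw [hg]; exact Finsupp.support_single_ne_zero 0 one_ne_zero
  have hmax := max_add_mem_support hf hgne
  have hmin := min_add_mem_support hf hgne
  rw [hsupp1, Finset.mem_singleton] at hmax hmin
  have hminle : f.coeff.support.min' (Finsupp.support_nonempty_iff.mpr (cne hf))
      ≤ f.coeff.support.max' (Finsupp.support_nonempty_iff.mpr (cne hf)) :=
    Finset.min'_le _ _ (f.coeff.support.max'_mem _)
  have hminle' : g.coeff.support.min' (Finsupp.support_nonempty_iff.mpr (cne hgne))
      ≤ g.coeff.support.max' (Finsupp.support_nonempty_iff.mpr (cne hgne)) :=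
    Finset.min'_le _ _ (g.coeff.support.max'_mem _)
  set n := f.coeff.support.max' (Finsupp.support_nonempty_iff.mpr (cne hf)) with hn
  have heq : f.coeff.support.min' (Finsupp.support_nonempty_iff.mpr (cne hf)) = n := by omega
  have hsub : f.coeff.support ⊆ {n} := by
    intro a ha
    have h1 := Finset.le_max' _ a ha
    have h2 := Finset.min'_le _ a ha
    rw [Finset.mem_singleton]
    omega
  refine ⟨n, f.coeff n, ?_, ?_⟩
  · exact Finsupp.mem_support_iff.mp (f.coeff.support.max'_mem _)
  · exact AddMonoidAlgebra.coeff_injective (Finsupp.support_subset_singleton.mp hsub)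



/-- Every element of the subgroup closure of a submonoid of `ℤ` is a difference. -/
lemma closure_eq_diff (M : AddSubmonoid ℤ) {z : ℤ}
    (hz : z ∈ AddSubgroup.closure (M : Set ℤ)) :
    ∃ a ∈ M, ∃ b ∈ M, z = a - b := by
  have : AddSubgroup.closure (M : Set ℤ) ≤
      { carrier := {z | ∃ a ∈ M, ∃ b ∈ M, z = a - b}
        zero_mem' := ⟨0, zero_mem M, 0, zero_mem M, by ring⟩
        add_mem' := by
          rintro x y ⟨a, ha, b, hb, rfl⟩ ⟨c, hc, d, hd, rfl⟩
          exact ⟨a + c, add_mem ha hc, b + d, add_mem hb hd, by ring⟩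
        neg_mem' := by
          rintro x ⟨a, ha, b, hb, rfl⟩
          exact ⟨b, hb, a, ha, by ring⟩ } := by
    rw [AddSubgroup.closure_le]
    intro a ha
    exact ⟨a, ha, 0, zero_mem M, by ring⟩
  exact this hz

lemma closure_eq_top_of_consecutive {M : AddSubmonoid ℤ} {s : ℤ}
    (hs : s ∈ M) (hs1 : s + 1 ∈ M) :
    AddSubgroup.closure (M : Set ℤ) = ⊤ := by
  have h1 : (1 : ℤ) ∈ AddSubgroup.closure (M : Set ℤ) := by
    have := sub_mem (AddSubgroup.subset_closure hs1) (AddSubgroup.subset_closure hs)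
    simpa using this
  rw [eq_top_iff]
  intro z _
  have := AddSubgroup.zsmul_mem _ h1 z
  simpa using this

lemma mul_mem_of_nonneg {M : AddSubmonoid ℤ} {k a : ℤ} (hk : 0 ≤ k) (ha : a ∈ M) :
    k * a ∈ M := by
  have := AddSubmonoid.nsmul_mem M ha k.toNat
  rwa [nsmul_eq_mul, Int.toNat_of_nonneg hk] at this

/-- If the subgroup generated by `M` is all of `ℤ`, then `M` contains a tail. -/
lemma tail_of_closure_top {M : AddSubmonoid ℤ}
    (h : AddSubgroup.closure (M : Set ℤ) = ⊤) :
    (∃ n₀ : ℤ, ∀ z, n₀ ≤ z → z ∈ M) ∨ (∃ n₀ : ℤ, ∀ z, z ≤ n₀ → z ∈ M) := by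
  obtain ⟨p, hp, q, hq, hpq⟩ := closure_eq_diff M (z := 1) (by rw [h]; trivial)
  -- p - q = 1
  rcases le_or_gt 0 q with hq0 | hq0
  · -- q ≥ 0, p = q + 1 ≥ 1
    left
    rcases eq_or_lt_of_le hq0 with hq0' | hq0'
    · -- q = 0, p = 1
      refine ⟨0, fun z hz => ?_⟩
      have : z * p ∈ M := mul_mem_of_nonneg hz hp
      rwa [show p = 1 by omega, mul_one] at this
    · refine ⟨q * q, fun z hz => ?_⟩
      have hq1 : 1 ≤ q := hq0'
      set r := z % q with hr
      set s := z / q with hsdef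
      have hzr : z = q * s + r := (Int.mul_ediv_add_emod z q).symm
      have hr0 : 0 ≤ r := Int.emod_nonneg z (by omega)
      have hrq : r < q := Int.emod_lt_of_pos z (by omega)
      have hs : q ≤ s := by
        rw [hsdef, Int.le_ediv_iff_mul_le (by omega : (0:ℤ) < q)]
        nlinarith
      have hzz : z = (s - r) * q + r * p := by
        have : p = q + 1 := by omega
        rw [this]; rw [hzr]; ring
      rw [hzz]
      exact add_mem (mul_mem_of_nonneg (by omega) hq) (mul_mem_of_nonneg hr0 hp)
  · -- q ≤ -1, p = q + 1 ≤ 0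
    right
    rcases eq_or_lt_of_le (show p ≤ 0 by omega) with hp0' | hp0'
    · -- p = 0, q = -1
      refine ⟨0, fun z hz => ?_⟩
      have : (-z) * q ∈ M := mul_mem_of_nonneg (by omega) hq
      rwa [show q = -1 by omega, mul_neg_one, neg_neg] at this
    · refine ⟨-(p * p), fun z hz => ?_⟩
      have hp1 : p ≤ -1 := by omega
      set r := (-z) % (-p) with hr
      set s := (-z) / (-p) with hsdef
      have hzr : -z = (-p) * s + r := (Int.mul_ediv_add_emod (-z) (-p)).symm
      have hr0 : 0 ≤ r := Int.emod_nonneg (-z) (by omega)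
      have hrq : r < -p := Int.emod_lt_of_pos (-z) (by omega)
      have hs : -p ≤ s := by
        rw [hsdef, Int.le_ediv_iff_mul_le (by omega : (0:ℤ) < -p)]
        nlinarith
      have hzz : z = (s - r) * p + r * q := by
        have : q = p - 1 := by omega
        rw [this]
        have hps : (-p) * s = -(p * s) := by ring
        have : z = p * s - r := by omega
        rw [this]; ring
      rw [hzz]
      exact add_mem (mul_mem_of_nonneg (by omega) hp) (mul_mem_of_nonneg hr0 hq)



lemma cone_nonneg {S : Set ℤ} (hS : ∀ a ∈ S, 0 ≤ a) {x : ℝ} (hx : x ∈ coneOfZ S) :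
    0 ≤ x := by
  obtain ⟨c, hsupp, hpos, rfl⟩ := hx
  refine Finset.sum_nonneg fun a ha => ?_
  have : (0:ℝ) ≤ (a : ℝ) := by
    exact_mod_cast hS a (hsupp ha)
  exact mul_nonneg (hpos a) this

lemma cone_nonpos {S : Set ℤ} (hS : ∀ a ∈ S, a ≤ 0) {x : ℝ} (hx : x ∈ coneOfZ S) :
    x ≤ 0 := by
  obtain ⟨c, hsupp, hpos, rfl⟩ := hx
  refine Finset.sum_nonpos fun a ha => ?_
  have : (a : ℝ) ≤ 0 := by
    exact_mod_cast hS a (hsupp ha)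
  exact mul_nonpos_of_nonneg_of_nonpos (hpos a) this

lemma single_mem_cone {S : Set ℤ} {m z : ℤ} (hm : m ∈ S) (hmne : m ≠ 0)
    (hz : 0 ≤ (z : ℝ) / (m : ℝ)) : (z : ℝ) ∈ coneOfZ S := by
  have hmne' : (m : ℝ) ≠ 0 := Int.cast_ne_zero.mpr hmne
  refine ⟨Finsupp.single m ((z : ℝ) / (m : ℝ)), ?_, ?_, ?_⟩
  · intro a ha
    have := Finsupp.support_single_subset (Finset.mem_coe.mp ha)
    simp only [Finset.mem_singleton] at this
    subst this; exact hm
  · intro a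
    rcases eq_or_ne a m with rfl | hne
    · rw [Finsupp.single_eq_same]; exact hz
    · rw [Finsupp.single_eq_of_ne hne]
  · rw [Finsupp.sum_single_index (by ring), div_mul_cancel₀ _ hmne']

variable {R : Type*} [CommRing R] [IsDomain R]

lemma exists_geom (m : ℤ) :
    ∃ b : LaurentPolynomial R, (T 1 - 1) * b = T m - 1 := by
  induction m using Int.induction_on with
  | zero => exact ⟨0, by rw [mul_zero, T_zero, sub_self]⟩
  | succ i hi =>
      obtain ⟨b, hb⟩ := hi
      refine ⟨b + T i, ?_⟩
      rw [mul_add, hb, show ((i:ℤ) + 1) = 1 + (i:ℤ) by ring, T_add]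
      ring
  | pred i hi =>
      obtain ⟨b, hb⟩ := hi
      refine ⟨b - T (-(i:ℤ) - 1), ?_⟩
      rw [mul_sub, hb, sub_mul, one_mul, ← T_add]
      rw [show (1 + (-(i:ℤ) - 1)) = -(i:ℤ) by ring]
      ring


end QfcAux

open QfcAux in
/-- For an `R`-subalgebra `A ≠ R` of `B = R[x^{±1}]` generated by monic monomials, TFAE:
(1) `A` is qfc in `B`; (2) the subgroup generated by `M(A)` is all of `ℤ`;
(3) `S⁻¹A = B`; (4) `Gap(A)` is finite. -/
theorem isQfc_tfae_one_variable (R : Type*) [CommRing R] [IsDomain R]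
    (A : Subalgebra R (LaurentPolynomial R))
    (hgen : ∃ D : Set ℤ,
      A = Algebra.adjoin R ((fun a => (LaurentPolynomial.T a : LaurentPolynomial R)) '' D))
    (hA : A ≠ ⊥) :
    [IsQfc A,
     AddSubgroup.closure (monSet (A : Set (LaurentPolynomial R))) = ⊤,
     locSet (A : Set (LaurentPolynomial R)) = Set.univ,
     (gapSet (A : Set (LaurentPolynomial R))).Finite].TFAE := by
  classical
  obtain ⟨D, hD⟩ := hgen
  set M := AddSubmonoid.closure D with hMdef
  have hAs : ∀ f : LaurentPolynomial R, f ∈ A ↔ ∀ n ∈ f.coeff.support, n ∈ M := by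
    intro f
    rw [hD, adjoin_eq_shadow]
    exact mem_shadow_iff
  have hTA : ∀ n : ℤ, (T n : LaurentPolynomial R) ∈ A ↔ n ∈ M := by
    intro n
    rw [hAs]
    simp [support_T]
  have hmon : monSet (A : Set (LaurentPolynomial R)) = (M : Set ℤ) := by
    ext n
    exact hTA n
  have hsupp : suppSet (A : Set (LaurentPolynomial R)) = (M : Set ℤ) := by
    ext n
    constructor
    · rintro ⟨f, hf, hn⟩
      exact (hAs f).mp hf n hn
    · intro hn
      exact ⟨T n, (hTA n).mpr hn, by rw [support_T]; simp⟩
  have hm0 : ∃ m : ℤ, m ∈ M ∧ m ≠ 0 := by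
    by_contra hc
    push_neg at hc
    apply hA
    apply le_antisymm _ bot_le
    intro f hf
    have hsub : f.coeff.support ⊆ {0} := fun n hn =>
      Finset.mem_singleton.mpr (hc n ((hAs f).mp hf n hn))
    rw [Algebra.mem_bot]
    refine ⟨f.coeff 0, ?_⟩
    rw [← C_eq_algebraMap, ← single_eq_C]
    exact (AddMonoidAlgebra.coeff_injective (Finsupp.support_subset_singleton.mp hsub)).symm
  have hshift : ∀ (f : LaurentPolynomial R) (c : ℤ),
      (∀ k ∈ f.coeff.support, c + k ∈ M) → (T c * f : LaurentPolynomial R) ∈ A := by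
    intro f c hc
    rw [hAs]
    intro k hk
    have hsupp' : (T c * f : LaurentPolynomial R).coeff.support
        = f.coeff.support.map (addLeftEmbedding c) :=
      AddMonoidAlgebra.support_coeff_single_mul f 1 (fun y => by simp) c
    rw [hsupp'] at hk
    obtain ⟨n, hn, rfl⟩ := Finset.mem_map.mp hk
    exact hc n hn
  have hkey : AddSubgroup.closure (M : Set ℤ) = ⊤ →
      ∀ f : LaurentPolynomial R, ∃ c, c ∈ M ∧ ∀ k ∈ f.coeff.support, c + k ∈ M := by
    intro h2 f
    have hdiff : ∀ z : ℤ, ∃ c, c ∈ M ∧ z + c ∈ M := by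
      intro z
      obtain ⟨a, ha, b, hb, hab⟩ := closure_eq_diff M (z := z) (by rw [h2]; trivial)
      exact ⟨b, hb, by rw [hab, sub_add_cancel]; exact ha⟩
    choose g hg1 hg2 using hdiff
    refine ⟨∑ n ∈ f.coeff.support, g n, sum_mem fun n _ => hg1 n, ?_⟩
    intro k hk
    have hrest : ∑ j ∈ f.coeff.support.erase k, g j ∈ M := sum_mem fun j _ => hg1 j
    have hsplit : (∑ n ∈ f.coeff.support, g n) + k
        = (k + g k) + ∑ j ∈ f.coeff.support.erase k, g j := by
      rw [← Finset.add_sum_erase _ g hk]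
      ring
    rw [hsplit]
    exact add_mem (hg2 k) hrest
  tfae_have 1 → 2
  | h1 => by
    obtain ⟨m, hmM, hmne⟩ := hm0
    obtain ⟨b, hb⟩ := exists_geom (R := R) m
    have ha_ne : (T 1 - 1 : LaurentPolynomial R) ≠ 0 := by
      intro hcon
      have h0 : (T 1 - 1 : LaurentPolynomial R).coeff 1 = 0 := by rw [hcon]; rfl
      rw [AddMonoidAlgebra.coeff_sub, Finsupp.sub_apply] at h0
      have e1 : (T 1 : LaurentPolynomial R).coeff 1 = 1 := by simp [T_apply]
      have e2 : (1 : LaurentPolynomial R).coeff 1 = 0 := by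
        show (Finsupp.single (0:ℤ) (1:R)) 1 = 0
        rw [Finsupp.single_eq_of_ne (by omega)]
      rw [e1, e2, sub_zero] at h0
      exact one_ne_zero h0
    have hprod : (T 1 - 1 : LaurentPolynomial R) * b ∈ A := by
      rw [hb]
      exact sub_mem ((hTA m).mpr hmM) (one_mem A)
    have hbne : b ≠ 0 := by
      rintro rfl
      rw [mul_zero] at hb
      have hTm : (T m : LaurentPolynomial R) = 1 := by
        have := sub_eq_zero.mp hb.symm
        exact this
      have h2 : (T m : LaurentPolynomial R).coeff m = (1 : LaurentPolynomial R).coeff m := by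
        rw [hTm]
      have e1 : (T m : LaurentPolynomial R).coeff m = 1 := by simp [T_apply]
      have e2 : (1 : LaurentPolynomial R).coeff m = 0 := by
        show (Finsupp.single (0:ℤ) (1:R)) m = 0
        rw [Finsupp.single_eq_of_ne (by omega)]
      rw [e1, e2] at h2
      exact one_ne_zero h2
    obtain ⟨u, v, huA, hvA⟩ := h1 (T 1 - 1) b ha_ne hbne hprod
    obtain ⟨n, r, hrne, hu⟩ := isUnit_single u.isUnit
    have hx : (u : LaurentPolynomial R) * (T 1 - 1)
        = AddMonoidAlgebra.single (n + 1) r - AddMonoidAlgebra.single n r := by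
      rw [hu, mul_sub, mul_one]
      congr 1
      rw [single_eq_C_mul_T, mul_T_assoc, ← single_eq_C_mul_T]
    rw [hx] at huA
    have hmem := (hAs _).mp huA
    have hn1 : (n + 1) ∈ M := by
      refine hmem _ ?_
      rw [Finsupp.mem_support_iff, AddMonoidAlgebra.coeff_sub, Finsupp.sub_apply,
          AddMonoidAlgebra.coeff_single, AddMonoidAlgebra.coeff_single, Finsupp.single_eq_same,
        Finsupp.single_eq_of_ne (by omega), sub_zero]
      exact hrne
    have hn : n ∈ M := by
      refine hmem _ ?_
      rw [Finsupp.mem_support_iff, AddMonoidAlgebra.coeff_sub, Finsupp.sub_apply,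
          AddMonoidAlgebra.coeff_single, AddMonoidAlgebra.coeff_single, Finsupp.single_eq_same,
        Finsupp.single_eq_of_ne (by omega), zero_sub]
      exact neg_ne_zero.mpr hrne
    rw [hmon]
    exact closure_eq_top_of_consecutive hn hn1
  tfae_have 2 → 3
  | h2 => by
    rw [hmon] at h2
    apply Set.eq_univ_of_forall
    intro f
    obtain ⟨c, hcM, hc⟩ := hkey h2 f
    exact ⟨T c, (hTA c).mpr hcM, isUnit_T c, hshift f c hc⟩
  tfae_have 3 → 2
  | h3 => by
    have hT1 : (T 1 : LaurentPolynomial R) ∈ locSet (A : Set (LaurentPolynomial R)) := by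
      rw [h3]; trivial
    obtain ⟨s, hsA, hsu, hsT⟩ := hT1
    obtain ⟨n, r, hrne, rfl⟩ := isUnit_single hsu
    have hnM : n ∈ M := by
      refine (hAs _).mp hsA n ?_
      rw [Finsupp.mem_support_iff, AddMonoidAlgebra.coeff_single, Finsupp.single_eq_same]
      exact hrne
    rw [single_eq_C_mul_T, mul_T_assoc, ← single_eq_C_mul_T] at hsT
    have hn1 : n + 1 ∈ M := by
      refine (hAs _).mp hsT (n + 1) ?_
      rw [Finsupp.mem_support_iff, AddMonoidAlgebra.coeff_single, Finsupp.single_eq_same]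
      exact hrne
    rw [hmon]
    exact closure_eq_top_of_consecutive hnM hn1
  tfae_have 2 → 1
  | h2 => by
    rw [hmon] at h2
    intro a b hane hbne _
    obtain ⟨c, hcM, hc⟩ := hkey h2 a
    obtain ⟨d, hdM, hd⟩ := hkey h2 b
    refine ⟨(isUnit_T (R := R) c).unit, (isUnit_T (R := R) d).unit, ?_, ?_⟩
    · rw [IsUnit.unit_spec]
      exact hshift a c hc
    · rw [IsUnit.unit_spec]
      exact hshift b d hd
  tfae_have 2 → 4
  | h2 => by
    rw [hmon] at h2
    rcases tail_of_closure_top h2 with ⟨n₀, htail⟩ | ⟨n₀, htail⟩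
    · by_cases hneg : ∃ m ∈ M, m < 0
      · obtain ⟨m, hmM, hm⟩ := hneg
        have hall : ∀ z : ℤ, z ∈ M := by
          intro z
          set k := max 0 (n₀ - z) with hkdef
          have hk0 : (0:ℤ) ≤ k := le_max_left _ _
          have h1 : n₀ ≤ z + k * (-m) := by nlinarith [le_max_right 0 (n₀ - z)]
          have h2' : z = (z + k * (-m)) + k * m := by ring
          rw [h2']
          exact add_mem (htail _ h1) (mul_mem_of_nonneg hk0 hmM)
        have hempty : gapSet (A : Set (LaurentPolynomial R)) = ∅ := by
          apply Set.diff_eq_empty.mpr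
          intro z _
          rw [hmon]
          exact hall z
        rw [hempty]
        exact Set.finite_empty
      · push_neg at hneg
        apply Set.Finite.subset (Set.finite_Icc 0 n₀)
        rintro z ⟨hzC, hzM⟩
        have hz0 : (0:ℤ) ≤ z := by
          have hzR : (0:ℝ) ≤ (z : ℝ) := by
            refine cone_nonneg ?_ hzC
            rw [hsupp]
            exact hneg
          exact_mod_cast hzR
        have hzn : z ≤ n₀ := by
          by_contra hcon
          push_neg at hcon
          exact hzM (show z ∈ monSet (A : Set (LaurentPolynomial R)) from
            (hTA z).mpr (htail z hcon.le))
        exact Set.mem_Icc.mpr ⟨hz0, hzn⟩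
    · by_cases hpos : ∃ m ∈ M, 0 < m
      · obtain ⟨m, hmM, hm⟩ := hpos
        have hall : ∀ z : ℤ, z ∈ M := by
          intro z
          set k := max 0 (z - n₀) with hkdef
          have hk0 : (0:ℤ) ≤ k := le_max_left _ _
          have h1 : z + k * (-m) ≤ n₀ := by nlinarith [le_max_right 0 (z - n₀)]
          have h2' : z = (z + k * (-m)) + k * m := by ring
          rw [h2']
          exact add_mem (htail _ h1) (mul_mem_of_nonneg hk0 hmM)
        have hempty : gapSet (A : Set (LaurentPolynomial R)) = ∅ := by
          apply Set.diff_eq_empty.mpr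
          intro z _
          rw [hmon]
          exact hall z
        rw [hempty]
        exact Set.finite_empty
      · push_neg at hpos
        apply Set.Finite.subset (Set.finite_Icc n₀ 0)
        rintro z ⟨hzC, hzM⟩
        have hz0 : z ≤ (0:ℤ) := by
          have hzR : (z : ℝ) ≤ 0 := by
            refine cone_nonpos ?_ hzC
            rw [hsupp]
            exact hpos
          exact_mod_cast hzR
        have hzn : n₀ ≤ z := by
          by_contra hcon
          push_neg at hcon
          exact hzM (show z ∈ monSet (A : Set (LaurentPolynomial R)) from
            (hTA z).mpr (htail z hcon.le))
        exact Set.mem_Icc.mpr ⟨hzn, hz0⟩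
  tfae_have 4 → 2
  | h4 => by
    rw [hmon]
    by_contra hcon
    obtain ⟨m, hmM, hmne⟩ := hm0
    have h1not : (1:ℤ) ∉ AddSubgroup.closure (M : Set ℤ) := by
      intro h1
      apply hcon
      rw [eq_top_iff]
      intro z _
      simpa using AddSubgroup.zsmul_mem _ h1 z
    have hmcl : (m:ℤ) ∈ AddSubgroup.closure (M : Set ℤ) := AddSubgroup.subset_closure hmM
    rcases lt_or_gt_of_ne hmne with hm | hm
    · have hinf : Set.Infinite (gapSet (A : Set (LaurentPolynomial R))) := by
        refine Set.infinite_of_injective_forall_mem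
          (f := fun n : ℕ => (n : ℤ) * m - 1) ?_ ?_
        · intro a b hab
          simp only at hab
          have h1 : (a:ℤ) * m = (b:ℤ) * m := by omega
          have h2 := mul_right_cancel₀ hmne h1
          exact_mod_cast h2
        · intro n
          refine ⟨?_, ?_⟩
          · show (((n:ℤ) * m - 1 : ℤ) : ℝ) ∈ coneOfZ (suppSet (A : Set (LaurentPolynomial R)))
            refine single_mem_cone ?_ hmne ?_
            · rw [hsupp]; exact hmM
            · rw [← neg_div_neg_eq]
              have hn0 : (0:ℝ) ≤ (n:ℝ) := Nat.cast_nonneg n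
              have hmR : (m:ℝ) < 0 := by exact_mod_cast hm
              apply div_nonneg
              · push_cast; nlinarith
              · push_cast; nlinarith
          · intro hmem
            have hz : ((n:ℤ) * m - 1) ∈ M := (hTA _).mp hmem
            have h1m : (1:ℤ) ∈ AddSubgroup.closure (M : Set ℤ) := by
              have h2 := AddSubgroup.zsmul_mem _ hmcl (n:ℤ)
              have h3 := AddSubgroup.subset_closure hz
              have h4 := sub_mem h2 h3
              simpa [smul_eq_mul, sub_sub_cancel] using h4
            exact h1not h1m
      exact hinf h4
    · have hinf : Set.Infinite (gapSet (A : Set (LaurentPolynomial R))) := by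
        refine Set.infinite_of_injective_forall_mem
          (f := fun n : ℕ => (n : ℤ) * m + 1) ?_ ?_
        · intro a b hab
          simp only at hab
          have h1 : (a:ℤ) * m = (b:ℤ) * m := by omega
          have h2 := mul_right_cancel₀ hmne h1
          exact_mod_cast h2
        · intro n
          refine ⟨?_, ?_⟩
          · show (((n:ℤ) * m + 1 : ℤ) : ℝ) ∈ coneOfZ (suppSet (A : Set (LaurentPolynomial R)))
            refine single_mem_cone ?_ hmne ?_
            · rw [hsupp]; exact hmM
            · have hn0 : (0:ℝ) ≤ (n:ℝ) := Nat.cast_nonneg n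
              have hmR : (0:ℝ) < (m:ℝ) := by exact_mod_cast hm
              apply div_nonneg
              · push_cast; nlinarith
              · push_cast; nlinarith
          · intro hmem
            have hz : ((n:ℤ) * m + 1) ∈ M := (hTA _).mp hmem
            have h1m : (1:ℤ) ∈ AddSubgroup.closure (M : Set ℤ) := by
              have h2 := AddSubgroup.zsmul_mem _ hmcl (n:ℤ)
              have h3 := AddSubgroup.subset_closure hz
              have h4 := sub_mem h3 h2
              simpa [smul_eq_mul, add_sub_cancel_left] using h4
            exact h1not h1m
      exact hinf h4
  tfae_finish
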